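/- Let m and n be coprime positive integers and let x, y ∈ ℂ[[t]] be power series with zero constant term, not both zero. Then there exist power series v, w ∈ ℂ[[t]] with zero constant term satisfying x = v^m and y = v^n·(1 + w) if and only if there exists a positive integer p such that ord x = m·p, ord y = n·p, and the leading coefficients x₀ of x and y₀ of y satisfy y₀^m = x₀^n. -/

import Mathlib

open PowerSeries

private lemma memSpanXPow {R : Type*} [CommRing R] {f : PowerSeries R} {n : ℕ} :
    f ∈ (Ideal.span {(X : R⟦X⟧)}) ^ n ↔ ∀ k < n, coeff k f = 0 := by
  rw [Ideal.span_singleton_pow, Ideal.mem_span_singleton, X_pow_dvd_iff]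

private lemma smodMem {f : ℂ⟦X⟧} {n : ℕ} :
    f ≡ 0 [SMOD (Ideal.span {(X : ℂ⟦X⟧)} ^ n • ⊤ : Ideal ℂ⟦X⟧)] ↔ ∀ k < n, coeff k f = 0 := by
  rw [SModEq.zero, Ideal.smul_top_eq_map, Algebra.algebraMap_self, Ideal.map_id,
    Submodule.restrictScalars_self, memSpanXPow]

instance : IsAdicComplete (Ideal.span {(X : ℂ⟦X⟧)}) ℂ⟦X⟧ where
  haus' := by
    intro f h
    ext k
    simpa using (smodMem.mp (h (k + 1))) k (by omega)
  prec' := by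
    intro f hf
    refine ⟨PowerSeries.mk fun k => coeff k (f (k + 1)), fun n => ?_⟩
    rw [SModEq.sub_mem, Ideal.smul_top_eq_map, Algebra.algebraMap_self, Ideal.map_id,
      Submodule.restrictScalars_self, memSpanXPow]
    intro k hk
    have h2 := hf (show k + 1 ≤ n by omega)
    rw [SModEq.sub_mem, Ideal.smul_top_eq_map, Algebra.algebraMap_self, Ideal.map_id,
      Submodule.restrictScalars_self, memSpanXPow] at h2
    have h3 := h2 k (by omega)
    simp only [map_sub, coeff_mk, sub_eq_zero] at h3 ⊢
    exact h3.symm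

/-- Existence of `m`-th roots of units in `ℂ⟦X⟧` with prescribed constant coefficient. -/
private lemma existsPowRoot (m : ℕ) (hm : 0 < m) (u : ℂ⟦X⟧) (hu : constantCoeff u ≠ 0)
    (c : ℂ) (hc : c ^ m = constantCoeff u) :
    ∃ r : ℂ⟦X⟧, r ^ m = u ∧ constantCoeff r = c := by
  have hc0 : c ≠ 0 := by
    intro h; rw [h, zero_pow hm.ne'] at hc; exact hu hc.symm
  have hH : HenselianRing ℂ⟦X⟧ (Ideal.span {(X : ℂ⟦X⟧)}) := inferInstance
  set I : Ideal ℂ⟦X⟧ := Ideal.span {(X : ℂ⟦X⟧)}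
  set f : Polynomial ℂ⟦X⟧ := Polynomial.X ^ m - Polynomial.C u with hf
  have hmonic : f.Monic := Polynomial.monic_X_pow_sub_C u hm.ne'
  have heval : f.eval (PowerSeries.C c) ∈ I := by
    rw [Ideal.mem_span_singleton, X_dvd_iff]
    simp [hf, hc]
  have hderiv : IsUnit (Ideal.Quotient.mk I (f.derivative.eval (PowerSeries.C c))) := by
    apply IsUnit.map
    rw [isUnit_iff_constantCoeff]
    simp [hf, Polynomial.derivative_X_pow]
    exact ⟨hm.ne', fun h => absurd h hc0⟩
  obtain ⟨r, hr, hrc⟩ := hH.is_henselian f hmonic (PowerSeries.C c) heval hderiv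
  refine ⟨r, ?_, ?_⟩
  · have := hr
    simp [hf, Polynomial.IsRoot, sub_eq_zero] at this
    exact this
  · rw [Ideal.mem_span_singleton, X_dvd_iff, map_sub] at hrc
    simpa [sub_eq_zero] using hrc

/-- Simultaneous roots in `ℂ` for coprime exponents. -/
private lemma existsRootPair {m n : ℕ} (hm : 0 < m) (hn : 0 < n) (hmn : Nat.Coprime m n)
    {a b : ℂ} (ha : a ≠ 0) (h : b ^ m = a ^ n) : ∃ c : ℂ, c ^ m = a ∧ c ^ n = b := by
  have hb : b ≠ 0 := by
    intro hb
    rw [hb, zero_pow hm.ne'] at h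
    exact pow_ne_zero n ha h.symm
  set A : ℂˣ := Units.mk0 a ha
  set B : ℂˣ := Units.mk0 b hb
  have hAB : B ^ m = A ^ n := by
    ext; simp [A, B, h]
  set i : ℤ := Nat.gcdA m n
  set j : ℤ := Nat.gcdB m n
  have e : (m : ℤ) * i + (n : ℤ) * j = 1 := by
    have := Nat.gcd_eq_gcd_ab m n
    rw [hmn] at this
    exact_mod_cast this.symm
  set C : ℂˣ := A ^ i * B ^ j with hC
  have key1 : B ^ ((m : ℤ) * j) = A ^ ((n : ℤ) * j) := by
    rw [zpow_mul, zpow_mul, zpow_natCast, zpow_natCast, hAB]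
  have key2 : A ^ ((n : ℤ) * i) = B ^ ((m : ℤ) * i) := by
    rw [zpow_mul, zpow_mul, zpow_natCast, zpow_natCast, hAB]
  have hCm : C ^ m = A := by
    have h1 : C ^ m = A ^ ((m : ℤ) * i) * B ^ ((m : ℤ) * j) := by
      rw [← zpow_natCast C m, hC, mul_zpow, ← zpow_mul, ← zpow_mul, mul_comm i, mul_comm j]
    rw [h1, key1, ← zpow_add, e, zpow_one]
  have hCn : C ^ n = B := by
    have h1 : C ^ n = A ^ ((n : ℤ) * i) * B ^ ((n : ℤ) * j) := by
      rw [← zpow_natCast C n, hC, mul_zpow, ← zpow_mul, ← zpow_mul, mul_comm i, mul_comm j]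
    rw [h1, key2, ← zpow_add, e, zpow_one]
  refine ⟨(C : ℂ), ?_, ?_⟩
  · have := congrArg Units.val hCm
    simpa [A] using this
  · have := congrArg Units.val hCn
    simpa [B] using this

/-- Decomposition of a power series of known order. -/
private lemma decompOfOrder {f : ℂ⟦X⟧} {d : ℕ} (h : f.order = d) :
    ∃ u : ℂ⟦X⟧, f = X ^ d * u ∧ constantCoeff u = coeff d f ∧ coeff d f ≠ 0 := by
  rw [order_eq_nat] at h
  obtain ⟨hc, hlt⟩ := h
  obtain ⟨u, hu⟩ := X_pow_dvd_iff.mpr hlt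
  refine ⟨u, hu, ?_, hc⟩
  rw [hu]
  simpa using (coeff_X_pow_mul u d 0).symm

private lemma orderXPowMul {p : ℕ} {u : ℂ⟦X⟧} (hu : constantCoeff u ≠ 0) :
    (X ^ p * u : ℂ⟦X⟧).order = p := by
  have h0 : u.order = (0 : ℕ) := order_eq_nat.mpr ⟨by simpa using hu, by omega⟩
  rw [order_mul, order_X_pow, h0, Nat.cast_zero, add_zero]


/-- Let `m` and `n` be coprime positive integers and let `x, y ∈ ℂ[[t]]` be power series
with zero constant term, not both zero. Then there exist power series `v, w ∈ ℂ[[t]]` with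
zero constant term satisfying `x = v ^ m` and `y = v ^ n * (1 + w)` if and only if there
exists a positive integer `p` such that `ord x = m·p`, `ord y = n·p`, and the leading
coefficients `x₀` of `x` and `y₀` of `y` satisfy `y₀ ^ m = x₀ ^ n`. -/
theorem stmt3 (m n : ℕ) (hm : 0 < m) (hn : 0 < n) (hmn : Nat.Coprime m n)
    (x y : PowerSeries ℂ)
    (hx0 : PowerSeries.constantCoeff x = 0) (hy0 : PowerSeries.constantCoeff y = 0)
    (hxy : ¬(x = 0 ∧ y = 0)) :
    (∃ v w : PowerSeries ℂ,
        PowerSeries.constantCoeff v = 0 ∧ PowerSeries.constantCoeff w = 0 ∧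
        x = v ^ m ∧ y = v ^ n * (1 + w)) ↔
    (∃ p : ℕ, 0 < p ∧ x.order = (m * p : ℕ) ∧ y.order = (n * p : ℕ) ∧
        (PowerSeries.coeff (n * p) y) ^ m = (PowerSeries.coeff (m * p) x) ^ n) := by
  constructor
  · rintro ⟨v, w, hv0, hw0, hx, hy⟩
    have hv : v ≠ 0 := by
      rintro rfl
      exact hxy ⟨by simp [hx, zero_pow hm.ne'], by simp [hy, zero_pow hn.ne']⟩
    have hvt : v.order ≠ ⊤ := by simpa [order_eq_top] using hv
    obtain ⟨d, hd'⟩ := WithTop.ne_top_iff_exists.mp hvt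
    have hd : v.order = (d : ℕ) := hd'.symm
    obtain ⟨u, huv, hu0, hune⟩ := decompOfOrder hd
    have hdpos : 0 < d := by
      rcases Nat.eq_zero_or_pos d with h0 | h
      · exfalso
        apply hune
        rw [h0, coeff_zero_eq_constantCoeff_apply]
        exact hv0
      · exact h
    have huc : constantCoeff u ≠ 0 := hu0 ▸ hune
    have hxd : x = X ^ (m * d) * u ^ m := by
      rw [hx, huv, mul_pow, ← pow_mul, mul_comm d m]
    have hyd : y = X ^ (n * d) * (u ^ n * (1 + w)) := by
      rw [hy, huv, mul_pow, ← pow_mul, mul_comm d n, mul_assoc]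
    have hucm : constantCoeff (u ^ m) ≠ 0 := by
      rw [map_pow]; exact pow_ne_zero _ huc
    have hucn : constantCoeff (u ^ n * (1 + w)) ≠ 0 := by
      rw [map_mul, map_pow, map_add, map_one, hw0, add_zero, mul_one]
      exact pow_ne_zero _ huc
    refine ⟨d, hdpos, ?_, ?_, ?_⟩
    · rw [hxd]; exact_mod_cast orderXPowMul hucm
    · rw [hyd]; exact_mod_cast orderXPowMul hucn
    · have cx : coeff (m * d) x = (constantCoeff u) ^ m := by
        rw [hxd]
        have := coeff_X_pow_mul (u ^ m) (m * d) 0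
        simpa [map_pow] using this
      have cy : coeff (n * d) y = (constantCoeff u) ^ n := by
        rw [hyd]
        have := coeff_X_pow_mul (u ^ n * (1 + w)) (n * d) 0
        simp only [zero_add] at this
        rw [this]
        simp [hw0]
      rw [cx, cy, ← pow_mul, ← pow_mul, mul_comm n m]
  · rintro ⟨p, hp, hxo, hyo, hlead⟩
    obtain ⟨u, hxu, hu0, hxne⟩ := decompOfOrder hxo
    obtain ⟨s, hys, hs0, hyne⟩ := decompOfOrder hyo
    set x₀ := coeff (m * p) x
    set y₀ := coeff (n * p) y
    obtain ⟨c, hcm, hcn⟩ := existsRootPair hm hn hmn hxne hlead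
    obtain ⟨r, hrm, hrc⟩ := existsPowRoot m hm u (hu0 ▸ hxne) c (by rw [hcm, hu0])
    have hc0 : c ≠ 0 := by
      intro h; rw [h, zero_pow hm.ne'] at hcm; exact hxne hcm.symm
    have hrn0 : constantCoeff (r ^ n) ≠ 0 := by
      rw [map_pow, hrc, hcn]; exact hyne
    refine ⟨X ^ p * r, s * (r ^ n)⁻¹ - 1, ?_, ?_, ?_, ?_⟩
    · simp [map_pow, constantCoeff_X, zero_pow hp.ne']
    · rw [map_sub, map_mul, PowerSeries.constantCoeff_inv, map_pow, hrc, hcn, hs0, map_one]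
      field_simp
      simp
    · rw [mul_pow, ← pow_mul, mul_comm p m, hrm, hxu]
    · have hcancel : (r ^ n) * (r ^ n)⁻¹ = 1 := PowerSeries.mul_inv_cancel _ hrn0
      calc y = X ^ (n * p) * s := hys
        _ = X ^ (n * p) * s * ((r ^ n) * (r ^ n)⁻¹) := by rw [hcancel, mul_one]
        _ = (X ^ p * r) ^ n * (1 + (s * (r ^ n)⁻¹ - 1)) := by
            rw [mul_pow, ← pow_mul, mul_comm p n]; ring
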